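/- Let O be an order in a quaternion algebra B over ℚ, and let u, φ ∈ O be two elements that do not commute. Then the ℤ-submodule Λ generated by 1, u, φ, uφ is an order in B, and its reduced discriminant satisfies discrd(Λ)² = disc(Λ) where disc(Λ) = (1/16)·(Δ(u)Δ(φ) - (Trd(u)Trd(φ) - 2Trd(u·φ̄))²)² ; in particular discrd(Λ) = (1/4)·|Δ(u)Δ(φ) - (Trd(u)Trd(φ) - 2Trd(u·φ̄))²| ≤ (1/4)·Δ(u)·Δ(φ) when Δ(u), Δ(φ) < 0. -/

import Mathlib

open Quaternion

/-- The reduced trace on `H(a,b)`: `Trd(α) = α + ᾱ = 2·re α` as a scalar. -/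
def trd {a b : ℚ} (x : ℍ[ℚ, a, b]) : ℚ := 2 * x.re

/-- The reduced norm on `H(a,b)`: the scalar with `α·ᾱ = Nrd(α)·1`. -/
def nrd {a b : ℚ} (x : ℍ[ℚ, a, b]) : ℚ := (x * star x).re

/-- The discriminant form `Δ(α) = Trd(α)² - 4·Nrd(α)`. -/
def disc {a b : ℚ} (x : ℍ[ℚ, a, b]) : ℚ := (trd x) ^ 2 - 4 * nrd x

/-- The Gram matrix `(Trd(βᵢ βⱼ))_{i,j}` of a system `β : Fin 4 → H(a,b)`. -/
def gram {a b : ℚ} (β : Fin 4 → ℍ[ℚ, a, b]) : Matrix (Fin 4) (Fin 4) ℚ :=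
  Matrix.of fun i j => trd (β i * β j)

section Aux

open Polynomial

variable {a b : ℚ}

private lemma nrd_eq (x : ℍ[ℚ,a,b]) :
    nrd x = x.re^2 - a*x.imI^2 - b*x.imJ^2 + a*b*x.imK^2 := by
  simp [nrd, QuaternionAlgebra.re_mul]; ring

private lemma nrd_nonneg (ha : a < 0) (hb : b < 0) (x : ℍ[ℚ,a,b]) : 0 ≤ nrd x := by
  rw [nrd_eq]
  nlinarith [sq_nonneg x.re, sq_nonneg x.imI, sq_nonneg x.imJ, sq_nonneg x.imK,
    mul_pos (neg_pos.2 ha) (neg_pos.2 hb)]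

private lemma nrd_pos (ha : a < 0) (hb : b < 0) {x : ℍ[ℚ,a,b]} (hx : x ≠ 0) : 0 < nrd x := by
  rcases (nrd_nonneg ha hb x).lt_or_eq with h | h
  · exact h
  · exfalso; apply hx
    have h' := h.symm
    rw [nrd_eq] at h'
    have k1 : 0 ≤ -a * x.imI^2 := mul_nonneg (by linarith) (sq_nonneg _)
    have k2 : 0 ≤ -b * x.imJ^2 := mul_nonneg (by linarith) (sq_nonneg _)
    have k3 : 0 ≤ (a*b) * x.imK^2 := mul_nonneg (mul_pos_of_neg_of_neg ha hb).le (sq_nonneg _)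
    have k0 : 0 ≤ x.re^2 := sq_nonneg _
    have e0 : x.re^2 = 0 := by nlinarith
    have e1 : -a * x.imI^2 = 0 := by nlinarith
    have e2 : -b * x.imJ^2 = 0 := by nlinarith
    have e3 : (a*b) * x.imK^2 = 0 := by nlinarith
    have f1 : x.imI^2 = 0 := by
      rcases mul_eq_zero.mp e1 with h | h
      · exact absurd h (by intro hh; simp at hh; linarith)
      · exact h
    have f2 : x.imJ^2 = 0 := by
      rcases mul_eq_zero.mp e2 with h | h
      · exact absurd h (by intro hh; simp at hh; linarith)
      · exact h
    have f3 : x.imK^2 = 0 := by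
      rcases mul_eq_zero.mp e3 with h | h
      · exact absurd h (ne_of_gt (mul_pos_of_neg_of_neg ha hb))
      · exact h
    ext
    · simpa using pow_eq_zero_iff two_ne_zero |>.mp e0
    · simpa using pow_eq_zero_iff two_ne_zero |>.mp f1
    · simpa using pow_eq_zero_iff two_ne_zero |>.mp f2
    · simpa using pow_eq_zero_iff two_ne_zero |>.mp f3

private lemma char_id (x : ℍ[ℚ,a,b]) : x * x = trd x • x - nrd x • (1 : ℍ[ℚ,a,b]) := by
  ext <;>
    simp [trd, nrd_eq, QuaternionAlgebra.re_mul, QuaternionAlgebra.imI_mul,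
      QuaternionAlgebra.imJ_mul, QuaternionAlgebra.imK_mul, smul_eq_mul] <;> ring

private lemma keyE (u φ : ℍ[ℚ,a,b]) :
    disc u * disc φ - (trd u * trd φ - 2 * trd (u * star φ)) ^ 2
      = 4 * nrd (u * φ - φ * u) := by
  simp only [disc, trd, nrd, QuaternionAlgebra.re_mul, QuaternionAlgebra.imI_mul,
    QuaternionAlgebra.imJ_mul, QuaternionAlgebra.imK_mul, QuaternionAlgebra.re_star,
    QuaternionAlgebra.imI_star, QuaternionAlgebra.imJ_star, QuaternionAlgebra.imK_star,
    QuaternionAlgebra.re_sub, QuaternionAlgebra.imI_sub, QuaternionAlgebra.imJ_sub,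
    QuaternionAlgebra.imK_sub]
  ring

private lemma anticomm (x y : ℍ[ℚ,a,b]) :
    y * x = (trd (x*y) - trd x * trd y) • (1:ℍ[ℚ,a,b]) + trd y • x + trd x • y - x*y := by
  ext <;>
    simp [trd, QuaternionAlgebra.re_mul, QuaternionAlgebra.imI_mul,
      QuaternionAlgebra.imJ_mul, QuaternionAlgebra.imK_mul, smul_eq_mul] <;> ring

private lemma prod6 (x y : ℍ[ℚ,a,b]) :
    y * (x * y) = (-(trd x * nrd y)) • (1:ℍ[ℚ,a,b]) + nrd y • x + trd (x*y) • y := by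
  ext <;>
    simp [trd, nrd_eq, QuaternionAlgebra.re_mul, QuaternionAlgebra.imI_mul,
      QuaternionAlgebra.imJ_mul, QuaternionAlgebra.imK_mul, smul_eq_mul] <;> ring

private lemma prod7 (x y : ℍ[ℚ,a,b]) :
    (x * y) * x = (-(trd y * nrd x)) • (1:ℍ[ℚ,a,b]) + trd (x*y) • x + nrd x • y := by
  ext <;>
    simp [trd, nrd_eq, QuaternionAlgebra.re_mul, QuaternionAlgebra.imI_mul,
      QuaternionAlgebra.imJ_mul, QuaternionAlgebra.imK_mul, smul_eq_mul] <;> ring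

private lemma prod9 (x y : ℍ[ℚ,a,b]) :
    (x * y) * (x * y) = (-(nrd x * nrd y)) • (1:ℍ[ℚ,a,b]) + trd (x*y) • (x*y) := by
  ext <;>
    simp [trd, nrd_eq, QuaternionAlgebra.re_mul, QuaternionAlgebra.imI_mul,
      QuaternionAlgebra.imJ_mul, QuaternionAlgebra.imK_mul, smul_eq_mul] <;> ring

private lemma det_fin_four' {R : Type*} [CommRing R] (A : Matrix (Fin 4) (Fin 4) R) :
    A.det =
      A 0 0 * (A 1 1 * (A 2 2 * A 3 3 - A 2 3 * A 3 2) - A 1 2 * (A 2 1 * A 3 3 - A 2 3 * A 3 1)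
          + A 1 3 * (A 2 1 * A 3 2 - A 2 2 * A 3 1))
      - A 0 1 * (A 1 0 * (A 2 2 * A 3 3 - A 2 3 * A 3 2) - A 1 2 * (A 2 0 * A 3 3 - A 2 3 * A 3 0)
          + A 1 3 * (A 2 0 * A 3 2 - A 2 2 * A 3 0))
      + A 0 2 * (A 1 0 * (A 2 1 * A 3 3 - A 2 3 * A 3 1) - A 1 1 * (A 2 0 * A 3 3 - A 2 3 * A 3 0)
          + A 1 3 * (A 2 0 * A 3 1 - A 2 1 * A 3 0))
      - A 0 3 * (A 1 0 * (A 2 1 * A 3 2 - A 2 2 * A 3 1) - A 1 1 * (A 2 0 * A 3 2 - A 2 2 * A 3 0)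
          + A 1 2 * (A 2 0 * A 3 1 - A 2 1 * A 3 0)) := by
  rw [Matrix.det_succ_row_zero]
  simp only [Fin.sum_univ_succ, Fin.sum_univ_zero, Matrix.det_fin_three, Matrix.submatrix_apply]
  norm_num [Fin.succAbove, Fin.lt_def]
  simp only [show (Fin.succ 2 : Fin 4) = 3 from rfl, show (Fin.castSucc 2 : Fin 4) = 2 from rfl]
  ring

set_option maxHeartbeats 1000000 in
private lemma detGram (u φ : ℍ[ℚ,a,b]) :
    (gram ![(1 : ℍ[ℚ, a, b]), u, φ, u * φ]).det =
      -((disc u * disc φ - (trd u * trd φ - 2 * trd (u * star φ)) ^ 2) ^ 2) / 16 := by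
  rw [det_fin_four']
  simp only [gram, Matrix.of_apply, Matrix.cons_val_zero, Matrix.cons_val_one, Matrix.head_cons,
    Matrix.cons_val_two, Matrix.tail_cons, Matrix.cons_val_three,
    disc, trd, nrd, QuaternionAlgebra.re_mul, QuaternionAlgebra.imI_mul,
    QuaternionAlgebra.imJ_mul, QuaternionAlgebra.imK_mul, QuaternionAlgebra.re_star,
    QuaternionAlgebra.imI_star, QuaternionAlgebra.imJ_star, QuaternionAlgebra.imK_star,
    QuaternionAlgebra.re_one, QuaternionAlgebra.imI_one, QuaternionAlgebra.imJ_one,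
    QuaternionAlgebra.imK_one]
  ring

private lemma aeval_char (x : ℍ[ℚ,a,b]) :
    (Polynomial.aeval x) (X^2 - C (trd x) * X + C (nrd x)) = 0 := by
  have h : (Polynomial.aeval x) (X^2 - C (trd x) * X + C (nrd x))
      = x*x - (algebraMap ℚ _ (trd x)) * x + algebraMap ℚ _ (nrd x) := by
    simp [sq]
  rw [h]
  ext <;>
    simp [trd, nrd_eq, QuaternionAlgebra.re_mul, QuaternionAlgebra.imI_mul,
      QuaternionAlgebra.imJ_mul, QuaternionAlgebra.imK_mul, QuaternionAlgebra.re_coe,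
      QuaternionAlgebra.imI_coe, QuaternionAlgebra.imJ_coe, QuaternionAlgebra.imK_coe,
      ← QuaternionAlgebra.coe_pow, QuaternionAlgebra.re_ofNat, QuaternionAlgebra.imI_ofNat,
      QuaternionAlgebra.imJ_ofNat, QuaternionAlgebra.imK_ofNat] <;>
    ring

private lemma trd_nrd_int {x : ℍ[ℚ,a,b]} (hx : IsIntegral ℤ x) :
    ∃ t n : ℤ, trd x = t ∧ nrd x = n := by
  by_cases hs : x.imI = 0 ∧ x.imJ = 0 ∧ x.imK = 0
  · obtain ⟨h1, h2, h3⟩ := hs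
    have hxc : x = algebraMap ℚ ℍ[ℚ,a,b] x.re := by
      ext <;> simp [h1, h2, h3, QuaternionAlgebra.re_coe, QuaternionAlgebra.imI_coe,
        QuaternionAlgebra.imJ_coe, QuaternionAlgebra.imK_coe]
    rw [hxc] at hx
    have hre : IsIntegral ℤ x.re :=
      (isIntegral_algebraMap_iff
        (QuaternionAlgebra.coe_injective (R := ℚ) (c₁ := a) (c₂ := 0) (c₃ := b))).mp hx
    obtain ⟨m, hm⟩ := IsIntegrallyClosed.isIntegral_iff.mp hre
    have hm' : (m : ℚ) = x.re := by simpa using hm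
    refine ⟨2*m, m*m, ?_, ?_⟩
    · rw [trd, ← hm']; push_cast; ring
    · rw [nrd_eq, h1, h2, h3, ← hm']; push_cast; ring
  · obtain ⟨p, pmonic, hp⟩ := hx
    have hp' : (Polynomial.aeval x) (p.map (algebraMap ℤ ℚ)) = 0 := by
      rw [Polynomial.aeval_map_algebraMap]
      exact hp
    set q : ℚ[X] := X^2 - C (trd x) * X + C (nrd x) with hq
    have hq2 : q = X^2 + (C (-(trd x)) * X + C (nrd x)) := by rw [hq]; simp; ring
    have qmonic : q.Monic := by
      rw [hq2]
      exact Polynomial.monic_X_pow_add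
        (lt_of_le_of_lt Polynomial.degree_linear_le (by norm_num))
    have qdeg : q.degree = 2 := by
      have hlt : (C (-(trd x)) * X + C (nrd x)).degree < (X^2 : ℚ[X]).degree := by
        rw [Polynomial.degree_X_pow]
        exact lt_of_le_of_lt Polynomial.degree_linear_le (by norm_num)
      rw [hq2, add_comm, Polynomial.degree_add_eq_right_of_degree_lt hlt,
        Polynomial.degree_X_pow]
      rfl
    set r : ℚ[X] := (p.map (algebraMap ℤ ℚ)) %ₘ q with hr
    have hsum : r + q * ((p.map (algebraMap ℤ ℚ)) /ₘ q) = p.map (algebraMap ℤ ℚ) :=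
      Polynomial.modByMonic_add_div _ q
    have haevalr : (Polynomial.aeval x) r = 0 := by
      have := congrArg (Polynomial.aeval x) hsum
      rw [map_add, map_mul, aeval_char x, hp', zero_mul, add_zero] at this
      · exact this
    have hrdeg : r.natDegree ≤ 1 := by
      have hlt : r.degree < 2 := by
        have := Polynomial.degree_modByMonic_lt (p.map (algebraMap ℤ ℚ)) qmonic
        rwa [qdeg] at this
      by_cases hr0 : r = 0
      · simp [hr0]
      · have h2 : r.degree < ((2:ℕ) : WithBot ℕ) := by exact_mod_cast hlt
        have := (Polynomial.natDegree_lt_iff_degree_lt hr0).mpr h2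
        omega
    have hrform := Polynomial.eq_X_add_C_of_natDegree_le_one hrdeg
    have hcoeffs : algebraMap ℚ ℍ[ℚ,a,b] (r.coeff 1) * x
        + algebraMap ℚ ℍ[ℚ,a,b] (r.coeff 0) = 0 := by
      have := haevalr
      rw [hrform] at this
      simpa using this
    have hxim : ¬(x.imI = 0 ∧ x.imJ = 0 ∧ x.imK = 0) := hs
    have hr1 : r.coeff 1 = 0 := by
      by_contra hne
      apply hxim
      have hcI := congrArg QuaternionAlgebra.imI hcoeffs
      have hcJ := congrArg QuaternionAlgebra.imJ hcoeffs
      have hcK := congrArg QuaternionAlgebra.imK hcoeffs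
      simp [QuaternionAlgebra.imI_mul, QuaternionAlgebra.imJ_mul, QuaternionAlgebra.imK_mul,
        QuaternionAlgebra.re_coe, QuaternionAlgebra.imI_coe, QuaternionAlgebra.imJ_coe,
        QuaternionAlgebra.imK_coe] at hcI hcJ hcK
      exact ⟨by rcases hcI with h|h; exact absurd h hne; exact h,
             by rcases hcJ with h|h; exact absurd h hne; exact h,
             by rcases hcK with h|h; exact absurd h hne; exact h⟩
    have hr0 : r.coeff 0 = 0 := by
      have hcR := congrArg QuaternionAlgebra.re hcoeffs
      simp [hr1, QuaternionAlgebra.re_mul, QuaternionAlgebra.re_coe] at hcR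
      exact hcR
    have hrzero : r = 0 := by rw [hrform, hr1, hr0]; simp
    have hdvd : q ∣ p.map (algebraMap ℤ ℚ) := by
      refine ⟨(p.map (algebraMap ℤ ℚ)) /ₘ q, ?_⟩
      conv_lhs => rw [← hsum, hrzero, zero_add]
    obtain ⟨g', hg'⟩ := IsIntegrallyClosed.eq_map_mul_C_of_dvd (K := ℚ) pmonic hdvd
    rw [qmonic.leadingCoeff, map_one, mul_one] at hg'
    refine ⟨-g'.coeff 1, g'.coeff 0, ?_, ?_⟩
    · have := congrArg (fun p => Polynomial.coeff p 1) hg'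
      simp [hq, Polynomial.coeff_map] at this
      push_cast
      linarith [this]
    · have := congrArg (fun p => Polynomial.coeff p 0) hg'
      simp [hq, Polynomial.coeff_map] at this
      push_cast
      linarith [this]

/-- `trd` as a linear map. -/
private def trdl : ℍ[ℚ,a,b] →ₗ[ℚ] ℚ where
  toFun := trd
  map_add' x y := by simp [trd]; ring
  map_smul' r x := by simp [trd]; ring

end Aux

/-- Let `O` be an order in a (definite) quaternion algebra `B = H(a,b)` over `ℚ`, and let
`u, φ ∈ O` be non-commuting.  Then `Λ = ℤ⟨1, u, φ, uφ⟩` is an order in `B` (a subring of `B`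
which is a full lattice), and with `E = Δ(u)Δ(φ) - (Trd(u)Trd(φ) - 2Trd(u φ̄))²` its
discriminant satisfies `disc(Λ) = |det Gram| = (1/16)·E²` — so
`discrd(Λ) = (1/4)·|E|` — and `(1/4)·|E| ≤ (1/4)·Δ(u)·Δ(φ)` when `Δ(u), Δ(φ) < 0`. -/
theorem stmt8 (a b : ℚ) (ha : a < 0) (hb : b < 0) (O : Subring ℍ[ℚ, a, b])
    (hfg : (AddSubgroup.toIntSubmodule O.toAddSubgroup).FG)
    (hfull : Submodule.span ℚ (O : Set ℍ[ℚ, a, b]) = ⊤)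
    (u φ : ℍ[ℚ, a, b]) (hu : u ∈ O) (hφ : φ ∈ O) (hcomm : u * φ ≠ φ * u) :
    (∃ S : Subring ℍ[ℚ, a, b],
        (S : Set ℍ[ℚ, a, b]) =
          (Submodule.span ℤ ({1, u, φ, u * φ} : Set ℍ[ℚ, a, b]) : Set ℍ[ℚ, a, b]) ∧
        LinearIndependent ℤ ![(1 : ℍ[ℚ, a, b]), u, φ, u * φ] ∧
        Submodule.span ℚ ((S : Set ℍ[ℚ, a, b])) = ⊤) ∧
      |(gram ![(1 : ℍ[ℚ, a, b]), u, φ, u * φ]).det| =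
        (1 / 16) * (disc u * disc φ - (trd u * trd φ - 2 * trd (u * star φ)) ^ 2) ^ 2 ∧
      (disc u < 0 → disc φ < 0 →
        (1 / 4) * |disc u * disc φ - (trd u * trd φ - 2 * trd (u * star φ)) ^ 2| ≤
          (1 / 4) * (disc u * disc φ)) := by
  -- elements of O are integral over ℤ
  have hOint : ∀ x ∈ O, IsIntegral ℤ x := by
    intro x hx
    refine IsIntegral.of_mem_of_fg (subalgebraOfSubring O) ?_ x hx
    have heq : Subalgebra.toSubmodule (subalgebraOfSubring O)
        = AddSubgroup.toIntSubmodule O.toAddSubgroup := by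
      ext y; exact Iff.rfl
    rw [heq]; exact hfg
  obtain ⟨t1, n1, ht1, hn1⟩ := trd_nrd_int (hOint u hu)
  obtain ⟨t2, n2, ht2, hn2⟩ := trd_nrd_int (hOint φ hφ)
  obtain ⟨t3, n3, ht3, hn3⟩ := trd_nrd_int (hOint (u*φ) (O.mul_mem hu hφ))
  -- the positivity of E
  have hcne : u*φ - φ*u ≠ 0 := sub_ne_zero.mpr hcomm
  have hEpos : 0 < disc u * disc φ - (trd u * trd φ - 2 * trd (u * star φ)) ^ 2 := by
    rw [keyE u φ]
    linarith [nrd_pos ha hb hcne]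
  -- the determinant value
  have hdet := detGram u φ
  have hdetne : (gram ![(1 : ℍ[ℚ, a, b]), u, φ, u * φ]).det ≠ 0 := by
    rw [hdet]
    have : 0 < (disc u * disc φ - (trd u * trd φ - 2 * trd (u * star φ)) ^ 2) ^ 2 :=
      pow_pos hEpos 2
    intro hcontra
    rw [div_eq_zero_iff] at hcontra
    rcases hcontra with h | h
    · linarith [this, neg_eq_zero.mp h]
    · norm_num at h
  -- linear independence over ℚ
  have liQ : LinearIndependent ℚ ![(1 : ℍ[ℚ, a, b]), u, φ, u * φ] := by
    rw [Fintype.linearIndependent_iff]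
    intro g hg
    set v : Fin 4 → ℍ[ℚ,a,b] := ![(1 : ℍ[ℚ, a, b]), u, φ, u * φ] with hv
    have hrow : ∀ j : Fin 4, (∑ i, g i * (gram v) i j) = 0 := by
      intro j
      have h1 : (∑ i, g i • v i) * v j = ∑ i, g i • (v i * v j) := by
        rw [Finset.sum_mul]
        simp [smul_mul_assoc]
      have h3 : ∑ i, g i * (gram v) i j = trdl ((∑ i, g i • v i) * v j) := by
        rw [h1, map_sum]
        apply Finset.sum_congr rfl
        intro i _
        rw [map_smul, smul_eq_mul]
        rfl
      rw [h3, hg, zero_mul, map_zero]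
    have hvm : Matrix.vecMul g (gram v) = 0 := by
      funext j
      simpa [Matrix.vecMul, dotProduct] using hrow j
    have hunit : IsUnit (gram v).det := Ne.isUnit hdetne
    have hg0 : g = 0 := by
      have h3 := congrArg (fun w => Matrix.vecMul w (gram v)⁻¹) hvm
      simpa [Matrix.vecMul_vecMul, Matrix.mul_nonsing_inv _ hunit, Matrix.vecMul_one,
        Matrix.zero_vecMul] using h3
    intro i
    rw [hg0]
    rfl
  -- linear independence over ℤ
  have liZ : LinearIndependent ℤ ![(1 : ℍ[ℚ, a, b]), u, φ, u * φ] := by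
    refine liQ.restrict_scalars ?_
    intro m n h
    have : (m : ℚ) = n := by simpa [zsmul_eq_mul] using h
    exact_mod_cast this
  -- the span of the generators over ℚ is everything
  have hrange : Set.range ![(1 : ℍ[ℚ, a, b]), u, φ, u * φ]
      = ({1, u, φ, u * φ} : Set ℍ[ℚ, a, b]) := by
    ext z
    simp only [Matrix.range_cons, Matrix.range_empty, Set.union_empty, Set.union_singleton,
      Set.mem_insert_iff, Set.mem_singleton_iff, Set.mem_union]
    tauto
  have hspanQtop : Submodule.span ℚ ({1, u, φ, u * φ} : Set ℍ[ℚ, a, b]) = ⊤ := by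
    rw [← hrange]
    exact liQ.span_eq_top_of_card_eq_finrank
      (by simp [QuaternionAlgebra.finrank_eq_four])
  -- the lattice
  set N : Submodule ℤ ℍ[ℚ,a,b] := Submodule.span ℤ ({1, u, φ, u * φ} : Set ℍ[ℚ, a, b]) with hN
  have hm1 : (1:ℍ[ℚ,a,b]) ∈ N := Submodule.subset_span (by simp)
  have hmu : u ∈ N := Submodule.subset_span (by simp)
  have hmφ : φ ∈ N := Submodule.subset_span (by simp)
  have hmuφ : u*φ ∈ N := Submodule.subset_span (by simp)
  have hcomb : ∀ (k0 k1 k2 k3 : ℤ),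
      (((k0:ℚ) • (1:ℍ[ℚ,a,b]) + (k1:ℚ) • u) + ((k2:ℚ) • φ + (k3:ℚ) • (u*φ))) ∈ N := by
    intro k0 k1 k2 k3
    refine N.add_mem (N.add_mem ?_ ?_) (N.add_mem ?_ ?_) <;>
      rw [Int.cast_smul_eq_zsmul]
    · exact N.smul_mem _ hm1
    · exact N.smul_mem _ hmu
    · exact N.smul_mem _ hmφ
    · exact N.smul_mem _ hmuφ
  have p_uu : u * u ∈ N := by
    have h : u * u = (((-n1:ℤ):ℚ) • (1:ℍ[ℚ,a,b]) + ((t1:ℤ):ℚ) • u)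
        + (((0:ℤ):ℚ) • φ + ((0:ℤ):ℚ) • (u*φ)) := by
      rw [char_id u, ht1, hn1]; push_cast; module
    rw [h]; exact hcomb _ _ _ _
  have p_uuφ : u * (u*φ) ∈ N := by
    have h : u * (u*φ) = (((0:ℤ):ℚ) • (1:ℍ[ℚ,a,b]) + ((0:ℤ):ℚ) • u)
        + (((-n1:ℤ):ℚ) • φ + ((t1:ℤ):ℚ) • (u*φ)) := by
      rw [← mul_assoc, char_id u, ht1, hn1, sub_mul, smul_mul_assoc, smul_mul_assoc, one_mul]
      push_cast; module
    rw [h]; exact hcomb _ _ _ _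
  have p_φu : φ * u ∈ N := by
    have h : φ * u = (((t3 - t1*t2:ℤ):ℚ) • (1:ℍ[ℚ,a,b]) + ((t2:ℤ):ℚ) • u)
        + (((t1:ℤ):ℚ) • φ + ((-1:ℤ):ℚ) • (u*φ)) := by
      rw [anticomm u φ, ht1, ht2, ht3]; push_cast; module
    rw [h]; exact hcomb _ _ _ _
  have p_φφ : φ * φ ∈ N := by
    have h : φ * φ = (((-n2:ℤ):ℚ) • (1:ℍ[ℚ,a,b]) + ((0:ℤ):ℚ) • u)
        + (((t2:ℤ):ℚ) • φ + ((0:ℤ):ℚ) • (u*φ)) := by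
      rw [char_id φ, ht2, hn2]; push_cast; module
    rw [h]; exact hcomb _ _ _ _
  have p_φuφ : φ * (u*φ) ∈ N := by
    have h : φ * (u*φ) = (((-(t1*n2):ℤ):ℚ) • (1:ℍ[ℚ,a,b]) + ((n2:ℤ):ℚ) • u)
        + (((t3:ℤ):ℚ) • φ + ((0:ℤ):ℚ) • (u*φ)) := by
      rw [prod6 u φ, ht1, hn2, ht3]; push_cast; module
    rw [h]; exact hcomb _ _ _ _
  have p_uφu : (u*φ) * u ∈ N := by
    have h : (u*φ) * u = (((-(t2*n1):ℤ):ℚ) • (1:ℍ[ℚ,a,b]) + ((t3:ℤ):ℚ) • u)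
        + (((n1:ℤ):ℚ) • φ + ((0:ℤ):ℚ) • (u*φ)) := by
      rw [prod7 u φ, ht2, hn1, ht3]; push_cast; module
    rw [h]; exact hcomb _ _ _ _
  have p_uφφ : (u*φ) * φ ∈ N := by
    have h : (u*φ) * φ = (((0:ℤ):ℚ) • (1:ℍ[ℚ,a,b]) + ((-n2:ℤ):ℚ) • u)
        + (((0:ℤ):ℚ) • φ + ((t2:ℤ):ℚ) • (u*φ)) := by
      rw [mul_assoc, char_id φ, ht2, hn2, mul_sub, mul_smul_comm, mul_smul_comm, mul_one]
      push_cast; module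
    rw [h]; exact hcomb _ _ _ _
  have p_uφuφ : (u*φ) * (u*φ) ∈ N := by
    have h : (u*φ) * (u*φ) = (((-(n1*n2):ℤ):ℚ) • (1:ℍ[ℚ,a,b]) + ((0:ℤ):ℚ) • u)
        + (((0:ℤ):ℚ) • φ + ((t3:ℤ):ℚ) • (u*φ)) := by
      rw [prod9 u φ, hn1, hn2, ht3]; push_cast; module
    rw [h]; exact hcomb _ _ _ _
  have hprod : ∀ (x y : ℍ[ℚ,a,b]), x ∈ ({1, u, φ, u * φ} : Set ℍ[ℚ, a, b]) →
      y ∈ ({1, u, φ, u * φ} : Set ℍ[ℚ, a, b]) → x * y ∈ N := by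
    intro x y hx hy
    simp only [Set.mem_insert_iff, Set.mem_singleton_iff] at hx hy
    rcases hx with h | h | h | h <;> rcases hy with h' | h' | h' | h' <;> rw [h, h'] <;>
      first
        | (rw [one_mul]
           first
             | exact hm1
             | exact hmu
             | exact hmφ
             | exact hmuφ)
        | (rw [mul_one]
           first
             | exact hmu
             | exact hmφ
             | exact hmuφ)
        | exact hm1
        | exact hmu
        | exact hmφ
        | exact hmuφ
        | exact p_uu
        | exact p_uuφ
        | exact p_φu
        | exact p_φφ
        | exact p_φuφ
        | exact p_uφu
        | exact p_uφφ
        | exact p_uφuφ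
  have key : ∀ x ∈ N, ∀ y ∈ N, x * y ∈ N := by
    intro x hx y hy
    refine Submodule.span_induction₂ (p := fun x y _ _ => x * y ∈ N)
      hprod ?_ ?_ ?_ ?_ ?_ ?_ hx hy
    · intro y hy; rw [zero_mul]; exact N.zero_mem
    · intro x hx; rw [mul_zero]; exact N.zero_mem
    · intro x y z hx hy hz h1 h2; rw [add_mul]; exact N.add_mem h1 h2
    · intro x y z hx hy hz h1 h2; rw [mul_add]; exact N.add_mem h1 h2
    · intro r x y hx hy h1; rw [smul_mul_assoc]; exact N.smul_mem r h1
    · intro r x y hx hy h1; rw [mul_smul_comm]; exact N.smul_mem r h1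
  -- the subring
  let S : Subring ℍ[ℚ,a,b] :=
    { carrier := (N : Set ℍ[ℚ,a,b])
      one_mem' := hm1
      mul_mem' := fun hx hy => key _ hx _ hy
      zero_mem' := N.zero_mem
      add_mem' := fun hx hy => N.add_mem hx hy
      neg_mem' := fun hx => N.neg_mem hx }
  refine ⟨⟨S, rfl, liZ, ?_⟩, ?_, ?_⟩
  · -- ℚ-span of S is everything
    show Submodule.span ℚ ((N : Set ℍ[ℚ,a,b])) = ⊤
    rw [hN, Submodule.span_span_of_tower]
    exact hspanQtop
  · -- determinant
    rw [hdet]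
    have h1 : -((disc u * disc φ - (trd u * trd φ - 2 * trd (u * star φ)) ^ 2) ^ 2) / 16
        = -(((disc u * disc φ - (trd u * trd φ - 2 * trd (u * star φ)) ^ 2) ^ 2) / 16) := by
      ring
    rw [h1, abs_neg, abs_of_nonneg (by positivity)]
    ring
  · -- inequality
    intro _ _
    rw [abs_of_pos hEpos]
    nlinarith [sq_nonneg (trd u * trd φ - 2 * trd (u * star φ))]
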